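/- The function g₁(x) = Σ_{k≥1} 2^{-k} ( 1/(1+2^k x) − x/(x+2^k) ) is convex, decreasing, and continuous on [0,1], with g₁(0) = 1 and g₁(1) = 0, and is continuously differentiable on every compact subset of (0,1]. -/

import Mathlib

open Set

noncomputable def g₁ (x : ℝ) : ℝ :=
  ∑' k : ℕ, (2 ^ (k + 1) : ℝ)⁻¹ *
    (1 / (1 + 2 ^ (k + 1) * x) - x / (x + 2 ^ (k + 1)))

namespace G1Aux

noncomputable def c (k : ℕ) : ℝ := 2 ^ (k + 1)

lemma c_pos (k : ℕ) : 0 < c k := by unfold c; positivity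

noncomputable def f (k : ℕ) (x : ℝ) : ℝ :=
  (c k)⁻¹ * (1 / (1 + c k * x) - x / (x + c k))

lemma g₁_eq (x : ℝ) : g₁ x = ∑' k, f k x := rfl

lemma f_eq (k : ℕ) {x : ℝ} (hx : 0 ≤ x) :
    f k x = (c k)⁻¹ * (1 + c k * x)⁻¹ + (x + c k)⁻¹ - (c k)⁻¹ := by
  have hc := c_pos k
  have h1 : (0:ℝ) < 1 + c k * x := by nlinarith
  have h2 : (0:ℝ) < x + c k := by linarith
  unfold f
  field_simp
  ring

lemma f_bound (k : ℕ) {x : ℝ} (hx : 0 ≤ x) : ‖f k x‖ ≤ (c k)⁻¹ := by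
  have hc := c_pos k
  have h1 : (0:ℝ) < 1 + c k * x := by nlinarith
  have h2 : (0:ℝ) < x + c k := by linarith
  have ha : 1 / (1 + c k * x) ≤ 1 := by
    rw [div_le_one h1]; nlinarith
  have hb : x / (x + c k) ≤ 1 := by
    rw [div_le_one h2]; linarith
  have ha' : 0 ≤ 1 / (1 + c k * x) := by positivity
  have hb' : 0 ≤ x / (x + c k) := by positivity
  have habs : |1 / (1 + c k * x) - x / (x + c k)| ≤ 1 := by
    rw [abs_le]; constructor <;> linarith
  rw [f, Real.norm_eq_abs, abs_mul, abs_of_nonneg (by positivity : (0:ℝ) ≤ (c k)⁻¹)]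
  calc (c k)⁻¹ * |1 / (1 + c k * x) - x / (x + c k)| ≤ (c k)⁻¹ * 1 :=
        mul_le_mul_of_nonneg_left habs (by positivity)
    _ = (c k)⁻¹ := mul_one _

lemma summable_c_inv : Summable (fun k => (c k)⁻¹) := by
  have h : (fun k : ℕ => (c k)⁻¹) = fun k => (2:ℝ)⁻¹ * (2⁻¹) ^ k := by
    funext k
    simp [c, pow_succ, mul_inv, mul_comm, inv_pow]
  rw [h]
  exact (summable_geometric_of_lt_one (by norm_num) (by norm_num)).mul_left _

lemma summable_c_sq_inv : Summable (fun k => ((c k) ^ 2)⁻¹) := by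
  have h : (fun k : ℕ => ((c k) ^ 2)⁻¹) = fun k => (4:ℝ)⁻¹ * (4⁻¹) ^ k := by
    funext k
    have h4 : (c k) ^ 2 = (4:ℝ) ^ (k + 1) := by
      rw [c, ← pow_mul, mul_comm, pow_mul]; norm_num
    rw [h4, pow_succ, mul_inv, mul_comm, inv_pow]
  rw [h]
  exact (summable_geometric_of_lt_one (by norm_num) (by norm_num)).mul_left _

lemma f_summable {x : ℝ} (hx : 0 ≤ x) : Summable (fun k => f k x) :=
  Summable.of_norm_bounded summable_c_inv (fun k => f_bound k hx)

lemma inv_affine_convex {a b : ℝ} (ha : 0 < a) (hb : 0 ≤ b) :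
    ConvexOn ℝ (Icc (0:ℝ) 1) (fun x => (a + b * x)⁻¹) := by
  refine ⟨convex_Icc _ _, ?_⟩
  intro x hx y hy p q hp hq hpq
  simp only [smul_eq_mul]
  set u := a + b * x with hu'
  set v := a + b * y with hv'
  have hu : 0 < u := by nlinarith [hx.1]
  have hv : 0 < v := by nlinarith [hy.1]
  have key : a + b * (p * x + q * y) = p * u + q * v := by
    rw [hu', hv']; nlinarith [hpq]
  rw [key]
  have hm : 0 < min u v := lt_min hu hv
  have h2 : 0 < p * u + q * v := by
    have h4 : (p + q) * min u v ≤ p * u + q * v := by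
      nlinarith [mul_le_mul_of_nonneg_left (min_le_left u v) hp,
        mul_le_mul_of_nonneg_left (min_le_right u v) hq]
    rw [hpq, one_mul] at h4; linarith
  rw [inv_eq_one_div, div_le_iff₀ h2]
  have expand : (p * u⁻¹ + q * v⁻¹) * (p * u + q * v)
      = p^2 + q^2 + p*q*(u*v⁻¹ + v*u⁻¹) := by
    field_simp; ring
  rw [expand]
  have h3 : 2 ≤ u*v⁻¹ + v*u⁻¹ := by
    have huv : u*v⁻¹ + v*u⁻¹ - 2 = (u - v)^2 / (u*v) := by field_simp; ring
    have hpos : 0 ≤ (u - v)^2 / (u*v) := by positivity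
    linarith
  nlinarith [mul_nonneg hp hq]

lemma inv_affine_antitone {a b : ℝ} (ha : 0 < a) (hb : 0 ≤ b) :
    AntitoneOn (fun x => (a + b * x)⁻¹) (Icc (0:ℝ) 1) := by
  intro x hx y hy hxy
  have h1 : 0 < a + b * x := by nlinarith [hx.1]
  have h2 : a + b * x ≤ a + b * y := by nlinarith
  exact inv_anti₀ h1 h2

lemma f_convex (k : ℕ) : ConvexOn ℝ (Icc (0:ℝ) 1) (f k) := by
  have hc := c_pos k
  have h1 : ConvexOn ℝ (Icc (0:ℝ) 1)
      (fun x => (c k)⁻¹ • (1 + c k * x)⁻¹) :=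
    (inv_affine_convex one_pos hc.le).smul (by positivity)
  have h2 : ConvexOn ℝ (Icc (0:ℝ) 1) (fun x => (c k + 1 * x)⁻¹) :=
    inv_affine_convex hc zero_le_one
  have h3 : ConvexOn ℝ (Icc (0:ℝ) 1) (fun _ : ℝ => -(c k)⁻¹) :=
    convexOn_const _ (convex_Icc _ _)
  refine ((h1.add h2).add h3).congr ?_
  intro x hx
  rw [f_eq k hx.1]
  simp only [Pi.add_apply, smul_eq_mul, one_mul]
  rw [add_comm (c k) x]
  ring

lemma f_antitone (k : ℕ) : AntitoneOn (f k) (Icc (0:ℝ) 1) := by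
  have hc := c_pos k
  intro x hx y hy hxy
  rw [f_eq k hx.1, f_eq k hy.1]
  have A := inv_affine_antitone one_pos hc.le hx hy hxy
  have B := inv_affine_antitone hc zero_le_one hx hy hxy
  simp only [one_mul] at A B
  have B' : (y + c k)⁻¹ ≤ (x + c k)⁻¹ := by
    rw [add_comm x, add_comm y]; exact B
  have A' := mul_le_mul_of_nonneg_left A (by positivity : (0:ℝ) ≤ (c k)⁻¹)
  linarith

noncomputable def fd (k : ℕ) (x : ℝ) : ℝ :=
  -(((1 + c k * x) ^ 2)⁻¹ + ((x + c k) ^ 2)⁻¹)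

lemma f_hasDerivAt (k : ℕ) {x : ℝ} (hx : 0 < x) : HasDerivAt (f k) (fd k x) x := by
  have hc := c_pos k
  have h1 : (0:ℝ) < 1 + c k * x := by nlinarith
  have h2 : (0:ℝ) < x + c k := by linarith
  have d1 : HasDerivAt (fun y : ℝ => 1 + c k * y) (c k) x := by
    simpa using ((hasDerivAt_id x).const_mul (c k)).const_add 1
  have d1' := d1.inv h1.ne'
  have d2 : HasDerivAt (fun y : ℝ => y + c k) 1 x := (hasDerivAt_id x).add_const _
  have d2' := d2.inv h2.ne'
  have D : HasDerivAt
      (fun y => (c k)⁻¹ * (1 + c k * y)⁻¹ + (y + c k)⁻¹ - (c k)⁻¹)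
      ((c k)⁻¹ * (-(c k) / (1 + c k * x) ^ 2) + -1 / (x + c k) ^ 2) x :=
    ((d1'.const_mul _).add d2').sub_const _
  have hEq : (fun y => (c k)⁻¹ * (1 + c k * y)⁻¹ + (y + c k)⁻¹ - (c k)⁻¹)
      =ᶠ[nhds x] f k := by
    filter_upwards [Ioi_mem_nhds hx] with y hy
    exact (f_eq k (le_of_lt hy)).symm
  have D' := D.congr_of_eventuallyEq hEq.symm
  refine D'.congr_deriv ?_
  rw [fd]
  field_simp
  ring

lemma fd_bound {δ : ℝ} (hδ : 0 < δ) (k : ℕ) {x : ℝ} (hx : δ < x) :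
    ‖fd k x‖ ≤ ((c k) ^ 2)⁻¹ * (δ⁻¹ ^ 2 + 1) := by
  have hc := c_pos k
  have hx0 : 0 < x := hδ.trans hx
  have h1 : (0:ℝ) < 1 + c k * x := by nlinarith
  have h2 : (0:ℝ) < x + c k := by linarith
  have e1 : ((1 + c k * x) ^ 2)⁻¹ ≤ ((c k * δ) ^ 2)⁻¹ := by
    apply inv_anti₀ (by positivity)
    have hle : c k * δ ≤ 1 + c k * x := by nlinarith
    exact pow_le_pow_left₀ (by positivity) hle 2
  have e2 : ((x + c k) ^ 2)⁻¹ ≤ ((c k) ^ 2)⁻¹ := by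
    apply inv_anti₀ (by positivity)
    nlinarith
  have e3 : ((c k * δ) ^ 2)⁻¹ = ((c k) ^ 2)⁻¹ * δ⁻¹ ^ 2 := by
    rw [mul_pow, mul_inv, inv_pow]
  rw [fd, norm_neg, Real.norm_eq_abs, abs_of_nonneg (by positivity)]
  rw [e3] at e1
  have hsplit : ((c k) ^ 2)⁻¹ * (δ⁻¹ ^ 2 + 1)
      = ((c k) ^ 2)⁻¹ * δ⁻¹ ^ 2 + ((c k) ^ 2)⁻¹ := by ring
  rw [hsplit]
  linarith

lemma fd_continuousOn {δ : ℝ} (hδ : 0 < δ) (k : ℕ) : ContinuousOn (fd k) (Ioi δ) := by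
  have hc := c_pos k
  apply ContinuousOn.neg
  apply ContinuousOn.add
  · apply ContinuousOn.inv₀ (by fun_prop)
    intro x hx
    have hx0 : 0 < x := hδ.trans hx
    positivity
  · apply ContinuousOn.inv₀ (by fun_prop)
    intro x hx
    have hx0 : 0 < x := hδ.trans hx
    positivity

lemma contDiffOn_Ioi {δ : ℝ} (hδ : 0 < δ) : ContDiffOn ℝ 1 g₁ (Ioi δ) := by
  have hu : Summable (fun k => ((c k) ^ 2)⁻¹ * (δ⁻¹ ^ 2 + 1)) :=
    summable_c_sq_inv.mul_right _
  have hD : ∀ x ∈ Ioi δ, HasDerivAt g₁ (∑' k, fd k x) x := by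
    intro x hx
    have h := hasDerivAt_tsum_of_isPreconnected hu isOpen_Ioi
      (convex_Ioi δ).isPreconnected
      (fun n y hy => f_hasDerivAt n (hδ.trans hy))
      (fun n y hy => fd_bound hδ n hy)
      (show δ + 1 ∈ Ioi δ by simp)
      (f_summable (by linarith : (0:ℝ) ≤ δ + 1)) hx
    have hg : g₁ = fun z => ∑' k, f k z := funext g₁_eq
    rw [hg]
    exact h
  rw [show (1 : WithTop ℕ∞) = 0 + 1 from (zero_add 1).symm,
    contDiffOn_succ_iff_deriv_of_isOpen isOpen_Ioi]
  refine ⟨fun x hx => (hD x hx).differentiableAt.differentiableWithinAt, ?_, ?_⟩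
  · intro h; simp at h
  · rw [contDiffOn_zero]
    apply ContinuousOn.congr (continuousOn_tsum (fd_continuousOn hδ) hu
      (fun n x hx => fd_bound hδ n hx))
    intro x hx
    exact (hD x hx).deriv

end G1Aux

open G1Aux in
theorem stmt_19 :
    ConvexOn ℝ (Set.Icc (0:ℝ) 1) g₁ ∧ AntitoneOn g₁ (Set.Icc (0:ℝ) 1) ∧
    ContinuousOn g₁ (Set.Icc (0:ℝ) 1) ∧ g₁ 0 = 1 ∧ g₁ 1 = 0 ∧
    ∀ K ⊆ Set.Ioc (0:ℝ) 1, IsCompact K → ContDiffOn ℝ 1 g₁ K := by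
  refine ⟨⟨convex_Icc _ _, ?_⟩, ?_, ?_, ?_, ?_, ?_⟩
  · intro x hx y hy p q hp hq hpq
    have hmem : p • x + q • y ∈ Icc (0:ℝ) 1 := (convex_Icc 0 1) hx hy hp hq hpq
    simp only [smul_eq_mul] at hmem ⊢
    rw [g₁_eq, g₁_eq, g₁_eq]
    calc ∑' k, f k (p * x + q * y)
        ≤ ∑' k, (p * f k x + q * f k y) := by
          apply Summable.tsum_le_tsum _ (f_summable hmem.1)
            (((f_summable hx.1).mul_left p).add ((f_summable hy.1).mul_left q))
          intro k
          simpa using (f_convex k).2 hx hy hp hq hpq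
      _ = p * ∑' k, f k x + q * ∑' k, f k y := by
          rw [Summable.tsum_add ((f_summable hx.1).mul_left p) ((f_summable hy.1).mul_left q),
            tsum_mul_left, tsum_mul_left]
  · intro x hx y hy hxy
    rw [g₁_eq, g₁_eq]
    exact Summable.tsum_le_tsum (fun k => f_antitone k hx hy hxy)
      (f_summable hy.1) (f_summable hx.1)
  · have hg : g₁ = fun z => ∑' k, f k z := funext g₁_eq
    rw [hg]
    apply continuousOn_tsum _ summable_c_inv (fun k x hx => f_bound k hx.1)
    intro k
    have hc := c_pos k
    apply ContinuousOn.congr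
      (f := fun x => (c k)⁻¹ * (1 + c k * x)⁻¹ + (x + c k)⁻¹ - (c k)⁻¹)
    · apply ContinuousOn.sub _ continuousOn_const
      apply ContinuousOn.add
      · exact continuousOn_const.mul (ContinuousOn.inv₀ (by fun_prop)
          (fun x hx => by nlinarith [hx.1]))
      · exact ContinuousOn.inv₀ (by fun_prop) (fun x hx => by nlinarith [hx.1])
    · intro x hx
      exact f_eq k hx.1
  · have h : ∀ k : ℕ, (2 ^ (k + 1) : ℝ)⁻¹ *
        (1 / (1 + 2 ^ (k + 1) * 0) - 0 / (0 + 2 ^ (k + 1))) = 2⁻¹ * (2⁻¹:ℝ) ^ k := by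
      intro k
      rw [mul_zero, zero_div, add_zero, div_one, sub_zero, mul_one,
        pow_succ, mul_inv, mul_comm, inv_pow]
    rw [g₁, tsum_congr h, tsum_mul_left,
      tsum_geometric_of_lt_one (by norm_num) (by norm_num)]
    norm_num
  · have h : ∀ k : ℕ, (2 ^ (k + 1) : ℝ)⁻¹ *
        (1 / (1 + 2 ^ (k + 1) * 1) - 1 / (1 + 2 ^ (k + 1))) = 0 := by
      intro k
      rw [mul_one, sub_self, mul_zero]
    rw [g₁, tsum_congr h, tsum_zero]
  · intro K hK hKc
    rcases K.eq_empty_or_nonempty with rfl | hne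
    · exact (contDiffOn_Ioi one_pos).mono (empty_subset _)
    · have h0 : sInf K ∈ K := hKc.sInf_mem hne
      have hpos : 0 < sInf K := (hK h0).1
      refine (contDiffOn_Ioi (by linarith : (0:ℝ) < sInf K / 2)).mono ?_
      intro x hx
      have hle := csInf_le hKc.bddBelow hx
      simp only [mem_Ioi]
      linarith
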